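/- arXiv:2604.01785 — 3 statements merged into one kernel-verified Lean document; each statement's English description precedes it below -/
import Mathlib

section
/- Let g ∈ C¹(ℝ₊) and let t, ε > 0. Then there exists a constant C_ε > 0 (depending only on ε) such that |∫₀^∞ g(x)² e^{-x²/(2t)} dx − √(πt/2)·g(0)²| ≤ ε√t·g(0)² + C_ε·t·∫₀^∞ g'(x)² e^{-x²/(2t)} dx. -/
open MeasureTheory Real Set


lemma cs_interval {f : ℝ → ℝ} (hf : Continuous f) {x : ℝ} (hx : 0 < x) :
    (∫ y in (0:ℝ)..x, f y)^2 ≤ x * ∫ y in (0:ℝ)..x, (f y)^2 := by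
  set m : ℝ := (∫ y in (0:ℝ)..x, f y) / x with hm
  have hint : IntervalIntegrable f volume 0 x := hf.intervalIntegrable _ _
  have hint2 : IntervalIntegrable (fun y => (f y)^2) volume 0 x :=
    (hf.pow 2).intervalIntegrable _ _
  have h0 : 0 ≤ ∫ y in (0:ℝ)..x, (f y - m)^2 :=
    intervalIntegral.integral_nonneg hx.le (fun y _ => sq_nonneg _)
  have hexp : ∫ y in (0:ℝ)..x, (f y - m)^2
      = (∫ y in (0:ℝ)..x, (f y)^2) - 2*m*(∫ y in (0:ℝ)..x, f y) + m^2 * x := by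
    have h1 : ∀ y, (f y - m)^2 = (f y)^2 - (2*m) * f y + m^2 := by intro y; ring
    simp_rw [h1]
    rw [intervalIntegral.integral_add (hint2.sub (hint.const_mul _))
        intervalIntegrable_const,
      intervalIntegral.integral_sub hint2 (hint.const_mul _),
      intervalIntegral.integral_const_mul, intervalIntegral.integral_const]
    simp; ring
  have hmx : m * x = ∫ y in (0:ℝ)..x, f y := by rw [hm, div_mul_cancel₀ _ hx.ne']
  nlinarith [h0, hexp, sq_nonneg m]

lemma tail_int {t : ℝ} (ht : 0 < t) (y : ℝ) :
    ∫ x in Ioi y, x * exp (-x^2/(2*t)) = t * exp (-y^2/(2*t)) := by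
  have key : ∀ x ∈ Ici y, HasDerivAt (fun x : ℝ => -(t * exp (-x^2/(2*t))))
      (x * exp (-x^2/(2*t))) x := by
    intro x _
    have h1 : HasDerivAt (fun x : ℝ => -x^2/(2*t)) (-(2*x)/(2*t)) x := by
      simpa using ((hasDerivAt_pow 2 x).neg.div_const (2*t))
    have h2 := (h1.exp.const_mul t).neg
    refine HasDerivAt.congr_deriv h2 (Eq.symm ?_)
    field_simp
  have hint : IntegrableOn (fun x : ℝ => x * exp (-x^2/(2*t))) (Ioi y) := by
    have h3 : Integrable (fun x : ℝ => x * exp (-(1/(2*t)) * x^2)) :=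
      integrable_mul_exp_neg_mul_sq (by positivity)
    have h4 : (fun x : ℝ => x * exp (-(1/(2*t)) * x^2))
        = fun x : ℝ => x * exp (-x^2/(2*t)) := by
      funext x; congr 1; ring_nf
    exact (h4 ▸ h3).integrableOn
  have htend : Filter.Tendsto (fun x : ℝ => -(t * exp (-x^2/(2*t)))) Filter.atTop (nhds 0) := by
    have h5 : Filter.Tendsto (fun x : ℝ => -x^2/(2*t)) Filter.atTop Filter.atBot := by
      apply Filter.Tendsto.atBot_div_const (by positivity)
      exact Filter.tendsto_neg_atBot_iff.mpr (Filter.tendsto_pow_atTop (by norm_num))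
    have := (Real.tendsto_exp_atBot.comp h5).const_mul t
    simpa using this.neg
  have := integral_Ioi_of_hasDerivAt_of_tendsto' key hint htend
  rw [this]; ring

lemma gauss_val {t : ℝ} (ht : 0 < t) :
    ∫ x in Ioi (0:ℝ), exp (-x^2/(2*t)) = Real.sqrt (π * t / 2) := by
  have h := integral_gaussian_Ioi (1/(2*t))
  have h4 : (fun x : ℝ => exp (-(1/(2*t)) * x^2)) = fun x : ℝ => exp (-x^2/(2*t)) := by
    funext x; congr 1; ring_nf
  rw [h4] at h
  rw [h]
  rw [show π / (1/(2*t)) = (π*t/2)*4 by field_simp; ring]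
  rw [Real.sqrt_mul (by positivity), show Real.sqrt 4 = 2 by
    rw [show (4:ℝ) = 2^2 by norm_num, Real.sqrt_sq (by norm_num)]]
  ring

lemma weight_int {t : ℝ} (ht : 0 < t) :
    Integrable (fun x : ℝ => exp (-x^2/(2*t))) := by
  have h3 : Integrable (fun x : ℝ => exp (-(1/(2*t)) * x^2)) :=
    integrable_exp_neg_mul_sq (by positivity)
  have h4 : (fun x : ℝ => exp (-(1/(2*t)) * x^2)) = fun x : ℝ => exp (-x^2/(2*t)) := by
    funext x; congr 1; ring_nf
  exact h4 ▸ h3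

lemma poincare {g : ℝ → ℝ} (hg : ContDiff ℝ 1 g) {t : ℝ} (ht : 0 < t)
    (hg2 : IntegrableOn (fun x => g x ^ 2 * exp (-x ^ 2 / (2 * t))) (Ioi 0) volume)
    (hd2 : IntegrableOn (fun x => (deriv g x) ^ 2 * exp (-x ^ 2 / (2 * t))) (Ioi 0) volume) :
    ∫ x in Ioi (0:ℝ), (g x - g 0) ^ 2 * exp (-x ^ 2 / (2 * t))
      ≤ t * ∫ x in Ioi (0:ℝ), (deriv g x) ^ 2 * exp (-x ^ 2 / (2 * t)) := by
  have hf : Continuous (deriv g) := hg.continuous_deriv le_rfl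
  have hgc : Continuous g := hg.continuous
  set w : ℝ → ℝ := fun x => exp (-x ^ 2 / (2 * t)) with hw_def
  have hw : Integrable w := weight_int ht
  have hwpos : ∀ x, 0 < w x := fun x => exp_pos _
  -- integrability of (g - g 0)^2 * w on Ioi 0
  have hIint : IntegrableOn (fun x => (g x - g 0) ^ 2 * w x) (Ioi 0) volume := by
    apply Integrable.mono' ((hg2.const_mul 2).add ((hw.integrableOn).const_mul (2 * g 0 ^ 2)))
    · exact (((hgc.sub continuous_const).pow 2).mul
        (by continuity : Continuous w)).aestronglyMeasurable.restrict
    · refine Filter.Eventually.of_forall fun x => ?_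
      rw [Real.norm_eq_abs, abs_of_nonneg (by positivity)]
      have h1 : (0:ℝ) ≤ 2 * g x ^ 2 + 2 * g 0 ^ 2 - (g x - g 0) ^ 2 := by
        nlinarith [sq_nonneg (g x + g 0)]
      show (g x - g 0) ^ 2 * w x ≤ 2 * (g x ^ 2 * w x) + 2 * g 0 ^ 2 * w x
      nlinarith [mul_nonneg h1 (hwpos x).le]
  set G : ℝ → ENNReal := fun y => ENNReal.ofReal ((deriv g y) ^ 2) with hG_def
  set F : ℝ → ENNReal := fun x => ENNReal.ofReal (x * w x) with hF_def
  have hGmeas : Measurable G := ENNReal.measurable_ofReal.comp ((hf.pow 2).measurable)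
  have hFmeas : Measurable F := ENNReal.measurable_ofReal.comp
    ((continuous_id.mul (by continuity : Continuous w)).measurable)
  -- step 1
  have step1 : ENNReal.ofReal (∫ x in Ioi (0:ℝ), (g x - g 0) ^ 2 * w x)
      = ∫⁻ x in Ioi (0:ℝ), ENNReal.ofReal ((g x - g 0) ^ 2 * w x) :=
    ofReal_integral_eq_lintegral_ofReal hIint
      (Filter.Eventually.of_forall fun x => by positivity)
  -- step 2 : pointwise bound
  have step2 : ∀ x ∈ Ioi (0:ℝ), ENNReal.ofReal ((g x - g 0) ^ 2 * w x)
      ≤ F x * ∫⁻ y in Ioc (0:ℝ) x, G y := by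
    intro x hx
    rw [mem_Ioi] at hx
    have hftc : ∫ y in (0:ℝ)..x, deriv g y = g x - g 0 :=
      intervalIntegral.integral_deriv_eq_sub
        (fun y _ => (hg.differentiable one_ne_zero).differentiableAt) (hf.intervalIntegrable _ _)
    have hcs : (g x - g 0) ^ 2 ≤ x * ∫ y in (0:ℝ)..x, (deriv g y) ^ 2 := by
      rw [← hftc]; exact cs_interval hf hx
    have hI2 : ∫ y in (0:ℝ)..x, (deriv g y) ^ 2 = ∫ y in Ioc (0:ℝ) x, (deriv g y) ^ 2 :=
      intervalIntegral.integral_of_le hx.le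
    have hiop : IntegrableOn (fun y => (deriv g y) ^ 2) (Ioc (0:ℝ) x) volume :=
      (hf.pow 2).integrableOn_Ioc
    have hlo : ENNReal.ofReal (∫ y in Ioc (0:ℝ) x, (deriv g y) ^ 2)
        = ∫⁻ y in Ioc (0:ℝ) x, G y :=
      ofReal_integral_eq_lintegral_ofReal hiop
        (Filter.Eventually.of_forall fun y => sq_nonneg _)
    calc ENNReal.ofReal ((g x - g 0) ^ 2 * w x)
        ≤ ENNReal.ofReal ((x * w x) * ∫ y in Ioc (0:ℝ) x, (deriv g y) ^ 2) := by
          apply ENNReal.ofReal_le_ofReal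
          rw [← hI2]
          calc (g x - g 0) ^ 2 * w x ≤ (x * ∫ y in (0:ℝ)..x, (deriv g y) ^ 2) * w x :=
                mul_le_mul_of_nonneg_right hcs (hwpos x).le
            _ = (x * w x) * ∫ y in (0:ℝ)..x, (deriv g y) ^ 2 := by ring
      _ = F x * ∫⁻ y in Ioc (0:ℝ) x, G y := by
          rw [ENNReal.ofReal_mul (by positivity), hlo]
  -- step 3
  have step3 : (∫⁻ x in Ioi (0:ℝ), ENNReal.ofReal ((g x - g 0) ^ 2 * w x))
      ≤ ∫⁻ x in Ioi (0:ℝ), F x * ∫⁻ y in Ioc (0:ℝ) x, G y :=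
    lintegral_mono_ae ((ae_restrict_iff' measurableSet_Ioi).2
      (Filter.Eventually.of_forall step2))
  -- the swap
  set H : ℝ → ℝ → ENNReal := fun x y => if y ≤ x then F x * G y else 0 with hH_def
  have hHmeas : Measurable (Function.uncurry H) := by
    apply Measurable.ite (measurableSet_le measurable_snd measurable_fst)
    · exact (hFmeas.comp measurable_fst).mul (hGmeas.comp measurable_snd)
    · exact measurable_const
  have claim4a : ∀ x ∈ Ioi (0:ℝ), F x * ∫⁻ y in Ioc (0:ℝ) x, G y
      = ∫⁻ y in Ioi (0:ℝ), H x y := by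
    intro x hx
    have h1 : (fun y => H x y) = (Iic x).indicator (fun y => F x * G y) := by
      funext y; simp [hH_def, Set.indicator_apply, mem_Iic]
    rw [h1, lintegral_indicator measurableSet_Iic, Measure.restrict_restrict measurableSet_Iic,
      show Iic x ∩ Ioi (0:ℝ) = Ioc (0:ℝ) x by rw [inter_comm, Set.Ioi_inter_Iic],
      lintegral_const_mul' _ _ ENNReal.ofReal_ne_top]
  have swap : (∫⁻ x in Ioi (0:ℝ), ∫⁻ y in Ioi (0:ℝ), H x y)
      = ∫⁻ y in Ioi (0:ℝ), ∫⁻ x in Ioi (0:ℝ), H x y :=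
    lintegral_lintegral_swap hHmeas.aemeasurable
  -- step 5 : evaluate inner integral after swap
  have step5 : ∀ y ∈ Ioi (0:ℝ), (∫⁻ x in Ioi (0:ℝ), H x y)
      = ENNReal.ofReal (t * w y) * G y := by
    intro y hy
    rw [mem_Ioi] at hy
    have h1 : (fun x => H x y) = (Ici y).indicator (fun x => F x * G y) := by
      funext x; simp [hH_def, Set.indicator_apply, mem_Ici]
    rw [h1, lintegral_indicator measurableSet_Ici, Measure.restrict_restrict measurableSet_Ici,
      show Ici y ∩ Ioi (0:ℝ) = Ici y from inter_eq_self_of_subset_left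
        (fun z hz => lt_of_lt_of_le hy hz),
      lintegral_mul_const' _ _ ENNReal.ofReal_ne_top]
    congr 1
    have hFint : IntegrableOn (fun x => x * w x) (Ici y) volume := by
      have h3 : Integrable (fun x : ℝ => x * exp (-(1/(2*t)) * x^2)) :=
        integrable_mul_exp_neg_mul_sq (by positivity)
      have h4 : (fun x : ℝ => x * exp (-(1/(2*t)) * x^2)) = fun x : ℝ => x * w x := by
        funext x; simp only [hw_def]; congr 1; ring_nf
      exact (h4 ▸ h3).integrableOn
    have := ofReal_integral_eq_lintegral_ofReal hFint
      ((ae_restrict_iff' measurableSet_Ici).2 (Filter.Eventually.of_forall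
        fun x hx => mul_nonneg (le_trans hy.le hx) (hwpos x).le))
    rw [← this, MeasureTheory.integral_Ici_eq_integral_Ioi]
    have := tail_int ht y
    rw [show ∫ x in Ioi y, x * w x = ∫ x in Ioi y, x * exp (-x^2/(2*t)) from rfl, this]
  -- step 6
  have hD : (0:ℝ) ≤ ∫ x in Ioi (0:ℝ), (deriv g x) ^ 2 * w x :=
    setIntegral_nonneg measurableSet_Ioi fun x _ => by positivity
  have step6 : (∫⁻ y in Ioi (0:ℝ), ENNReal.ofReal (t * w y) * G y)
      = ENNReal.ofReal (t * ∫ y in Ioi (0:ℝ), (deriv g y) ^ 2 * w y) := by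
    have h1 : ∀ y : ℝ, ENNReal.ofReal (t * w y) * G y
        = ENNReal.ofReal (t * ((deriv g y) ^ 2 * w y)) := by
      intro y
      rw [← ENNReal.ofReal_mul (by positivity)]
      congr 1; ring
    simp_rw [h1]
    rw [← ofReal_integral_eq_lintegral_ofReal (hd2.const_mul t)
      (Filter.Eventually.of_forall fun y => by positivity), integral_const_mul]
  -- conclude
  rw [← ENNReal.ofReal_le_ofReal_iff (by positivity)]
  rw [step1]
  calc (∫⁻ x in Ioi (0:ℝ), ENNReal.ofReal ((g x - g 0) ^ 2 * w x))
      ≤ ∫⁻ x in Ioi (0:ℝ), F x * ∫⁻ y in Ioc (0:ℝ) x, G y := step3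
    _ = ∫⁻ x in Ioi (0:ℝ), ∫⁻ y in Ioi (0:ℝ), H x y := by
        apply setLIntegral_congr_fun measurableSet_Ioi
        exact claim4a
    _ = ∫⁻ y in Ioi (0:ℝ), ∫⁻ x in Ioi (0:ℝ), H x y := swap
    _ = ∫⁻ y in Ioi (0:ℝ), ENNReal.ofReal (t * w y) * G y := by
        apply setLIntegral_congr_fun measurableSet_Ioi
        exact step5
    _ = ENNReal.ofReal (t * ∫ y in Ioi (0:ℝ), (deriv g y) ^ 2 * w y) := step6

/-- one-dimensional Gaussian boundary-trace estimate (Lemma `magic`). -/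
theorem stmt0 :
    ∀ ε > (0:ℝ), ∃ C > (0:ℝ), ∀ g : ℝ → ℝ, ContDiff ℝ 1 g → ∀ t > (0:ℝ),
      IntegrableOn (fun x => g x ^ 2 * Real.exp (-x ^ 2 / (2 * t))) (Ioi 0) volume →
      IntegrableOn (fun x => (deriv g x) ^ 2 * Real.exp (-x ^ 2 / (2 * t))) (Ioi 0) volume →
      |(∫ x in Ioi (0:ℝ), g x ^ 2 * Real.exp (-x ^ 2 / (2 * t))) -
          Real.sqrt (π * t / 2) * g 0 ^ 2| ≤
        ε * Real.sqrt t * g 0 ^ 2 +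
          C * t * ∫ x in Ioi (0:ℝ), (deriv g x) ^ 2 * Real.exp (-x ^ 2 / (2 * t)) := by
  intro ε hε
  have hsq : (0:ℝ) < Real.sqrt (2/π) := Real.sqrt_pos.2 (by positivity)
  set ε' : ℝ := ε * Real.sqrt (2/π) with hε'_def
  have hε'pos : 0 < ε' := mul_pos hε hsq
  refine ⟨1 + 1/ε', by positivity, ?_⟩
  intro g hg t ht hg2 hd2
  have hgc : Continuous g := hg.continuous
  set w : ℝ → ℝ := fun x => Real.exp (-x ^ 2 / (2 * t)) with hw_def
  have hw : Integrable w := weight_int ht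
  have hwpos : ∀ x, 0 < w x := fun x => exp_pos _
  have hW : ∫ x in Ioi (0:ℝ), w x = Real.sqrt (π * t / 2) := gauss_val ht
  have hIint : IntegrableOn (fun x => (g x - g 0) ^ 2 * w x) (Ioi 0) volume := by
    apply Integrable.mono' ((hg2.const_mul 2).add ((hw.integrableOn).const_mul (2 * g 0 ^ 2)))
    · exact (((hgc.sub continuous_const).pow 2).mul
        (by continuity : Continuous w)).aestronglyMeasurable.restrict
    · refine Filter.Eventually.of_forall fun x => ?_
      rw [Real.norm_eq_abs, abs_of_nonneg (by positivity)]
      have h1 : (0:ℝ) ≤ 2 * g x ^ 2 + 2 * g 0 ^ 2 - (g x - g 0) ^ 2 := by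
        nlinarith [sq_nonneg (g x + g 0)]
      show (g x - g 0) ^ 2 * w x ≤ 2 * (g x ^ 2 * w x) + 2 * g 0 ^ 2 * w x
      nlinarith [mul_nonneg h1 (hwpos x).le]
  have hpoin := poincare hg ht hg2 hd2
  set D : ℝ := ∫ x in Ioi (0:ℝ), (deriv g x) ^ 2 * w x with hD_def
  set I : ℝ := ∫ x in Ioi (0:ℝ), (g x - g 0) ^ 2 * w x with hI_def
  have hD : 0 ≤ D := setIntegral_nonneg measurableSet_Ioi fun x _ => by positivity
  have hI : 0 ≤ I := setIntegral_nonneg measurableSet_Ioi fun x _ => by positivity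
  have hhint : IntegrableOn (fun x => g x ^ 2 * w x - g 0 ^ 2 * w x) (Ioi 0) volume :=
    hg2.sub ((hw.integrableOn).const_mul (g 0 ^ 2))
  have hdiff : (∫ x in Ioi (0:ℝ), g x ^ 2 * w x) - Real.sqrt (π * t / 2) * g 0 ^ 2
      = ∫ x in Ioi (0:ℝ), (g x ^ 2 * w x - g 0 ^ 2 * w x) := by
    rw [integral_sub hg2 ((hw.integrableOn).const_mul (g 0 ^ 2)), integral_const_mul, hW]
    ring
  -- pointwise bound
  set bnd : ℝ → ℝ := fun x => (1 + 1/ε') * ((g x - g 0) ^ 2 * w x) + (ε' * g 0 ^ 2) * w x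
    with hbnd_def
  have hbint : IntegrableOn bnd (Ioi 0) volume :=
    (hIint.const_mul _).add ((hw.integrableOn).const_mul _)
  have hptwise : ∀ x, |g x ^ 2 * w x - g 0 ^ 2 * w x| ≤ bnd x := by
    intro x
    have hmain : ∀ d b : ℝ, 2*b*d ≤ (1/ε')*d^2 + ε'*b^2 := by
      intro d b
      have h0 : (1/ε')*d^2 + ε'*b^2 - 2*b*d = (1/ε')*(d-ε'*b)^2 := by
        field_simp; ring
      nlinarith [mul_nonneg (by positivity : (0:ℝ) ≤ 1/ε') (sq_nonneg (d-ε'*b))]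
    have key : |g x ^ 2 - g 0 ^ 2| ≤ (1 + 1/ε') * (g x - g 0) ^ 2 + ε' * g 0 ^ 2 := by
      rcases abs_cases (g x ^ 2 - g 0 ^ 2) with ⟨h, _⟩ | ⟨h, _⟩ <;> rw [h]
      · nlinarith [hmain (g x - g 0) (g 0)]
      · nlinarith [hmain (g x - g 0) (-(g 0)), sq_nonneg (g x - g 0)]
    calc |g x ^ 2 * w x - g 0 ^ 2 * w x| = |g x ^ 2 - g 0 ^ 2| * w x := by
          rw [show g x ^ 2 * w x - g 0 ^ 2 * w x = (g x ^ 2 - g 0 ^ 2) * w x by ring,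
            abs_mul, abs_of_pos (hwpos x)]
      _ ≤ ((1 + 1/ε') * (g x - g 0) ^ 2 + ε' * g 0 ^ 2) * w x :=
          mul_le_mul_of_nonneg_right key (hwpos x).le
      _ = bnd x := by simp only [hbnd_def]; ring
  have habs : |(∫ x in Ioi (0:ℝ), g x ^ 2 * w x) - Real.sqrt (π * t / 2) * g 0 ^ 2|
      ≤ ∫ x in Ioi (0:ℝ), bnd x := by
    rw [hdiff]
    calc |∫ x in Ioi (0:ℝ), (g x ^ 2 * w x - g 0 ^ 2 * w x)|
        ≤ ∫ x in Ioi (0:ℝ), |g x ^ 2 * w x - g 0 ^ 2 * w x| := by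
          simpa [Real.norm_eq_abs] using
            norm_integral_le_integral_norm (μ := volume.restrict (Ioi 0))
              (fun x => g x ^ 2 * w x - g 0 ^ 2 * w x)
      _ ≤ ∫ x in Ioi (0:ℝ), bnd x :=
          integral_mono hhint.abs hbint hptwise
  have hbval : ∫ x in Ioi (0:ℝ), bnd x
      = (1 + 1/ε') * I + ε' * g 0 ^ 2 * Real.sqrt (π * t / 2) := by
    simp only [hbnd_def]
    rw [integral_add (hIint.const_mul _) ((hw.integrableOn).const_mul _),
      integral_const_mul, integral_const_mul, hW, hI_def]
  have hsqrt : Real.sqrt (2/π) * Real.sqrt (π * t / 2) = Real.sqrt t := by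
    rw [← Real.sqrt_mul (by positivity)]
    congr 1
    field_simp
  have heps : ε' * g 0 ^ 2 * Real.sqrt (π * t / 2) = ε * Real.sqrt t * g 0 ^ 2 := by
    rw [hε'_def, mul_assoc ε, mul_comm (Real.sqrt (2/π)) (g 0 ^ 2), mul_assoc ε,
      mul_assoc (g 0 ^ 2), hsqrt]
    ring
  have hmono : (1 + 1/ε') * I ≤ (1 + 1/ε') * (t * D) :=
    mul_le_mul_of_nonneg_left hpoin (by positivity)
  calc |(∫ x in Ioi (0:ℝ), g x ^ 2 * w x) - Real.sqrt (π * t / 2) * g 0 ^ 2|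
      ≤ ∫ x in Ioi (0:ℝ), bnd x := habs
    _ = (1 + 1/ε') * I + ε' * g 0 ^ 2 * Real.sqrt (π * t / 2) := hbval
    _ ≤ (1 + 1/ε') * (t * D) + ε * Real.sqrt t * g 0 ^ 2 := by rw [heps]; linarith
    _ = ε * Real.sqrt t * g 0 ^ 2 + (1 + 1/ε') * t * D := by ring
end

section
/- Let g : ℝ → ℝ be a bounded continuous function. Then ∫_ℝ g(x)·e^{−dist(x,[−π/2,π/2])²/(2t)} dx = ∫_{−π/2}^{π/2} g(x) dx + (g(π/2) + g(−π/2))·√(πt/2) + o(√t) as t → 0⁺. -/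
open MeasureTheory Real Set Filter Topology Asymptotics

lemma infDist_Icc_of_ge {a b x : ℝ} (hab : a ≤ b) (hx : b ≤ x) :
    Metric.infDist x (Icc a b) = x - b := by
  apply le_antisymm
  · have h := Metric.infDist_le_dist_of_mem (x := x) (right_mem_Icc.2 hab)
    rwa [Real.dist_eq, abs_of_nonneg (sub_nonneg.2 hx)] at h
  · rw [← not_lt]
    intro h
    obtain ⟨y, hy, hd⟩ := (Metric.infDist_lt_iff (nonempty_Icc.2 hab)).1 h
    rw [Real.dist_eq] at hd
    have h1 : x - y ≤ |x - y| := le_abs_self _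
    have := hy.2
    linarith

lemma infDist_Icc_of_le {a b x : ℝ} (hab : a ≤ b) (hx : x ≤ a) :
    Metric.infDist x (Icc a b) = a - x := by
  apply le_antisymm
  · have h := Metric.infDist_le_dist_of_mem (x := x) (left_mem_Icc.2 hab)
    rwa [Real.dist_eq, abs_of_nonpos (sub_nonpos.2 hx), neg_sub] at h
  · rw [← not_lt]
    intro h
    obtain ⟨y, hy, hd⟩ := (Metric.infDist_lt_iff (nonempty_Icc.2 hab)).1 h
    rw [Real.dist_eq] at hd
    have h1 : y - x ≤ |x - y| := by rw [abs_sub_comm]; exact le_abs_self _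
    have := hy.1
    linarith

lemma tail_formula (g : ℝ → ℝ) (a : ℝ) {t : ℝ} (ht : 0 < t) :
    ∫ x in Ioi a, g x * Real.exp (-(x - a) ^ 2 / (2 * t))
      = Real.sqrt t * ∫ u in Ioi (0:ℝ), g (a + Real.sqrt t * u) * Real.exp (-u ^ 2 / 2) := by
  have hst : 0 < Real.sqrt t := Real.sqrt_pos.2 ht
  have h1 : ∫ u in Ioi (0:ℝ), g (a + Real.sqrt t * u) * Real.exp (-u ^ 2 / 2)
      = (Real.sqrt t)⁻¹ * ∫ s in Ioi (0:ℝ), g (a + s) * Real.exp (-s ^ 2 / (2 * t)) := by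
    have h := integral_comp_mul_left_Ioi
      (fun s => g (a + s) * Real.exp (-s ^ 2 / (2 * t))) 0 hst
    simp only [mul_zero, smul_eq_mul] at h
    rw [← h]
    refine setIntegral_congr_fun measurableSet_Ioi (fun u _ => ?_)
    have : -(Real.sqrt t * u) ^ 2 / (2 * t) = -u ^ 2 / 2 := by
      rw [mul_pow, Real.sq_sqrt ht.le]
      field_simp
    rw [this]
  have h2 : ∫ s in Ioi (0:ℝ), g (a + s) * Real.exp (-s ^ 2 / (2 * t))
      = ∫ x in Ioi a, g x * Real.exp (-(x - a) ^ 2 / (2 * t)) := by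
    have hmp : MeasurePreserving (fun x : ℝ => x + a) volume volume :=
      measurePreserving_add_right volume a
    have hemb : MeasurableEmbedding (fun x : ℝ => x + a) :=
      (Homeomorph.addRight a).measurableEmbedding
    have h := hmp.setIntegral_preimage_emb hemb
      (fun x => g x * Real.exp (-(x - a) ^ 2 / (2 * t))) (Ioi a)
    rw [show ((fun x : ℝ => x + a) ⁻¹' Ioi a) = Ioi 0 by ext x; simp] at h
    rw [← h]
    refine setIntegral_congr_fun measurableSet_Ioi (fun s _ => ?_)
    simp [add_sub_cancel_right, add_comm]
  rw [← h2, h1]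
  field_simp

lemma sqrt_pi_div_two : Real.sqrt (π / (1/2)) / 2 = Real.sqrt (π / 2) := by
  rw [show π / (1/2 : ℝ) = 4 * (π / 2) by ring, Real.sqrt_mul (by norm_num),
    show Real.sqrt 4 = 2 by rw [show (4:ℝ) = 2 ^ 2 by norm_num, Real.sqrt_sq (by norm_num)]]
  ring

lemma tail_tendsto (g : ℝ → ℝ) (hg : Continuous g) (M : ℝ) (hb : ∀ x, |g x| ≤ M) (c : ℝ) :
    Tendsto (fun t : ℝ => ∫ u in Ioi (0:ℝ), g (c + Real.sqrt t * u) * Real.exp (-u ^ 2 / 2))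
      (𝓝[>] 0) (𝓝 (g c * Real.sqrt (π / 2))) := by
  have hexp : Integrable (fun u : ℝ => Real.exp (-(1/2 : ℝ) * u ^ 2)) :=
    integrable_exp_neg_mul_sq (by norm_num)
  have heq : ∀ u : ℝ, Real.exp (-u ^ 2 / 2) = Real.exp (-(1/2 : ℝ) * u ^ 2) := by
    intro u; congr 1; ring
  have key : Tendsto
      (fun t : ℝ => ∫ u in Ioi (0:ℝ), g (c + Real.sqrt t * u) * Real.exp (-u ^ 2 / 2))
      (𝓝[>] 0) (𝓝 (∫ u in Ioi (0:ℝ), g c * Real.exp (-u ^ 2 / 2))) := by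
    apply tendsto_integral_filter_of_dominated_convergence
      (fun u => M * Real.exp (-(1/2 : ℝ) * u ^ 2))
    · filter_upwards with t
      exact ((hg.comp (continuous_const.add (continuous_const.mul continuous_id))).mul
        (Real.continuous_exp.comp (by continuity))).aestronglyMeasurable.restrict
    · filter_upwards with t
      filter_upwards with u
      rw [norm_mul, Real.norm_eq_abs, Real.norm_eq_abs, abs_of_pos (Real.exp_pos _), heq]
      exact mul_le_mul_of_nonneg_right (hb _) (Real.exp_pos _).le
    · exact (hexp.const_mul M).integrableOn
    · filter_upwards with u
      have h1 : Tendsto (fun t : ℝ => Real.sqrt t) (𝓝[>] 0) (𝓝 0) := by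
        have := (Real.continuous_sqrt.tendsto 0).mono_left (nhdsWithin_le_nhds (s := Ioi 0))
        simpa using this
      have h2 : Tendsto (fun t : ℝ => c + Real.sqrt t * u) (𝓝[>] 0) (𝓝 c) := by
        have := (h1.mul_const u).const_add c
        simpa using this
      exact ((hg.tendsto c).comp h2).mul_const _
  have hval : ∫ u in Ioi (0:ℝ), g c * Real.exp (-u ^ 2 / 2) = g c * Real.sqrt (π / 2) := by
    rw [integral_const_mul]
    congr 1
    simp_rw [heq]
    rw [integral_gaussian_Ioi, sqrt_pi_div_two]
  rwa [hval] at key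

lemma integrable_gauss_shift {t : ℝ} (ht : 0 < t) (c : ℝ) (g : ℝ → ℝ) (hg : Continuous g)
    (M : ℝ) (hM : ∀ x, |g x| ≤ M) :
    Integrable (fun x : ℝ => g x * Real.exp (-(x - c) ^ 2 / (2 * t))) := by
  have h0 : Integrable (fun x : ℝ => Real.exp (-(1/(2*t)) * x ^ 2)) :=
    integrable_exp_neg_mul_sq (by positivity)
  have h1 : Integrable (fun x : ℝ => Real.exp (-(x - c) ^ 2 / (2 * t))) := by
    refine (h0.comp_sub_right c).congr (ae_of_all _ fun x => ?_)
    show Real.exp (-(1/(2*t)) * (x - c) ^ 2) = _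
    rw [show -(1/(2*t)) * (x - c) ^ 2 = -(x - c) ^ 2 / (2 * t) by ring]
  exact h1.bdd_mul hg.aestronglyMeasurable (c := M) (ae_of_all _ fun x => by simpa using hM x)

/-- Laplace expansion
`∫ g e^{-dist(x,[-π/2,π/2])²/(2t)} dx
  = ∫_{-π/2}^{π/2} g + (g(π/2)+g(-π/2))√(πt/2) + o(√t)` as `t → 0⁺`. -/
theorem stmt5 (g : ℝ → ℝ) (hg : Continuous g) (hb : ∃ M, ∀ x, |g x| ≤ M) :
    (fun t : ℝ =>
        (∫ x, g x *
            Real.exp (-(Metric.infDist x (Icc (-(π / 2)) (π / 2))) ^ 2 / (2 * t))) -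
          (∫ x in Icc (-(π / 2)) (π / 2), g x) -
          (g (π / 2) + g (-(π / 2))) * Real.sqrt (π * t / 2))
      =o[𝓝[>] (0:ℝ)] fun t => Real.sqrt t := by
  obtain ⟨M, hM⟩ := hb
  have hpi : (0:ℝ) < π / 2 := by positivity
  have hab : -(π / 2) ≤ π / 2 := by linarith
  set h : ℝ → ℝ := fun t =>
    (∫ u in Ioi (0:ℝ), g (π / 2 + Real.sqrt t * u) * Real.exp (-u ^ 2 / 2)) +
    (∫ u in Ioi (0:ℝ), g (-(π / 2 + Real.sqrt t * u)) * Real.exp (-u ^ 2 / 2)) -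
    (g (π / 2) + g (-(π / 2))) * Real.sqrt (π / 2) with hh_def
  have hF := tail_tendsto g hg M hM (π / 2)
  have hG := tail_tendsto (fun x => g (-x)) (hg.comp continuous_neg) M (fun x => hM _) (π / 2)
  have hh : Tendsto h (𝓝[>] 0) (𝓝 0) := by
    have := (hF.add hG).sub_const ((g (π / 2) + g (-(π / 2))) * Real.sqrt (π / 2))
    rw [show g (π/2) * Real.sqrt (π/2) + (fun x => g (-x)) (π/2) * Real.sqrt (π/2)
        - (g (π / 2) + g (-(π / 2))) * Real.sqrt (π / 2) = 0 by simp; ring] at this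
    exact this
  have hkey : ∀ t ∈ Ioi (0:ℝ),
      (∫ x, g x * Real.exp (-(Metric.infDist x (Icc (-(π / 2)) (π / 2))) ^ 2 / (2 * t))) -
        (∫ x in Icc (-(π / 2)) (π / 2), g x) -
        (g (π / 2) + g (-(π / 2))) * Real.sqrt (π * t / 2) = Real.sqrt t * h t := by
    intro t ht
    rw [mem_Ioi] at ht
    set φ : ℝ → ℝ := fun x =>
      g x * Real.exp (-(Metric.infDist x (Icc (-(π / 2)) (π / 2))) ^ 2 / (2 * t)) with hφ_def
    -- integrability on the three pieces
    have hIoi : IntegrableOn φ (Ioi (π / 2)) := by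
      refine ((integrable_gauss_shift ht (π/2) g hg M hM).integrableOn).congr_fun
        (fun x hx => ?_) measurableSet_Ioi
      rw [hφ_def]
      simp only
      rw [infDist_Icc_of_ge hab (le_of_lt hx)]
    have hIic : IntegrableOn φ (Iic (-(π / 2))) := by
      refine ((integrable_gauss_shift ht (-(π/2)) g hg M hM).integrableOn).congr_fun
        (fun x hx => ?_) measurableSet_Iic
      rw [hφ_def]
      simp only
      rw [infDist_Icc_of_le hab hx]
      congr 2
      ring
    have hIcc : IntegrableOn φ (Ioc (-(π / 2)) (π / 2)) := by
      have hφcont : Continuous φ := by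
        refine hg.mul (Real.continuous_exp.comp ?_)
        exact (((Metric.continuous_infDist_pt _).pow 2).neg).div_const _
      exact (hφcont.integrableOn_Icc).mono_set Ioc_subset_Icc_self
    have e1 : Ioi (-(π / 2)) = Ioc (-(π / 2)) (π / 2) ∪ Ioi (π / 2) :=
      (Ioc_union_Ioi_eq_Ioi hab).symm
    have hIoi' : IntegrableOn φ (Ioi (-(π / 2))) := by rw [e1]; exact hIcc.union hIoi
    have hdisj2 : Disjoint (Ioc (-(π / 2)) (π / 2)) (Ioi (π / 2)) := by
      rw [Set.disjoint_left]
      rintro x ⟨_, h2⟩ h3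
      exact absurd h3 (not_lt.2 h2)
    have hsplit : (∫ x, φ x) =
        (∫ x in Iic (-(π / 2)), φ x) + ((∫ x in Ioc (-(π / 2)) (π / 2), φ x) +
          (∫ x in Ioi (π / 2), φ x)) := by
      rw [← setIntegral_univ (f := φ), ← Iic_union_Ioi (a := -(π / 2)),
        setIntegral_union (Iic_disjoint_Ioi le_rfl) measurableSet_Ioi hIic hIoi', e1,
        setIntegral_union hdisj2 measurableSet_Ioi hIcc hIoi]
    -- middle piece
    have hmid : ∫ x in Ioc (-(π / 2)) (π / 2), φ x = ∫ x in Icc (-(π / 2)) (π / 2), g x := by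
      rw [← integral_Icc_eq_integral_Ioc]
      refine setIntegral_congr_fun measurableSet_Icc (fun x hx => ?_)
      rw [hφ_def]
      simp only
      rw [Metric.infDist_zero_of_mem hx]
      simp
    -- right piece
    have hright : ∫ x in Ioi (π / 2), φ x
        = Real.sqrt t * ∫ u in Ioi (0:ℝ), g (π / 2 + Real.sqrt t * u) * Real.exp (-u ^ 2 / 2) := by
      rw [← tail_formula g (π / 2) ht]
      refine setIntegral_congr_fun measurableSet_Ioi (fun x hx => ?_)
      rw [hφ_def]
      simp only
      rw [infDist_Icc_of_ge hab (le_of_lt hx)]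
    -- left piece
    have hleft : ∫ x in Iic (-(π / 2)), φ x
        = Real.sqrt t * ∫ u in Ioi (0:ℝ),
            g (-(π / 2 + Real.sqrt t * u)) * Real.exp (-u ^ 2 / 2) := by
      have hrefl := integral_comp_neg_Iic (-(π / 2))
        (fun y => g (-y) * Real.exp (-(y - π / 2) ^ 2 / (2 * t)))
      rw [neg_neg] at hrefl
      have h2 : ∫ x in Iic (-(π / 2)), φ x
          = ∫ x in Ioi (π / 2), g (-x) * Real.exp (-(x - π / 2) ^ 2 / (2 * t)) := by
        rw [← hrefl]
        refine setIntegral_congr_fun measurableSet_Iic (fun x hx => ?_)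
        rw [hφ_def]
        simp only [neg_neg]
        rw [infDist_Icc_of_le hab hx]
        congr 2
        ring
      rw [h2, tail_formula (fun x => g (-x)) (π / 2) ht]
    rw [hsplit, hmid, hright, hleft, hh_def]
    have hsq : Real.sqrt (π * t / 2) = Real.sqrt t * Real.sqrt (π / 2) := by
      rw [show π * t / 2 = t * (π / 2) by ring, Real.sqrt_mul ht.le]
    rw [hsq]
    ring
  have hlo : (fun t : ℝ => Real.sqrt t * h t) =o[𝓝[>] (0:ℝ)]
      (fun t : ℝ => Real.sqrt t * 1) :=
    (isBigO_refl (fun t : ℝ => Real.sqrt t) _).mul_isLittleO ((isLittleO_one_iff ℝ).2 hh)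
  refine hlo.congr' ?_ ?_
  · filter_upwards [self_mem_nhdsWithin] with t ht
    exact (hkey t ht).symm
  · filter_upwards with t
    rw [mul_one]
end

section
/- Let V : ℝⁿ → ℝ be a differentiable function satisfying the Polyak–Łojasiewicz inequality V(x) − min V ≤ C_PL·‖∇V(x)‖² for all x, with C_PL > 0. Then for all x ∈ ℝⁿ, (1/(4·C_PL))·dist(x, argmin V)² ≤ V(x) − min V. -/
open Metric Set

set_option maxHeartbeats 1000000 in

/-- Ekeland-style key lemma via compactness: if `c^2 < 1/(4*CPL)`, then there is a
minimizer `y` of `V` within distance `√(V x - m)/c` of `x`. -/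
lemma ekeland_key (n : ℕ) (V : EuclideanSpace ℝ (Fin n) → ℝ) (hd : Differentiable ℝ V)
    (m CPL : ℝ) (hCPL : 0 < CPL) (hm : ∀ x, m ≤ V x)
    (hPL : ∀ x, V x - m ≤ CPL * ‖gradient V x‖ ^ 2)
    (c : ℝ) (hc : 0 < c) (hcc : c ^ 2 < 1 / (4 * CPL)) (x : EuclideanSpace ℝ (Fin n)) :
    ∃ y, V y = m ∧ dist x y ≤ Real.sqrt (V x - m) / c := by
  set f : EuclideanSpace ℝ (Fin n) → ℝ := fun z => Real.sqrt (V z - m) with hf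
  have hfc : Continuous f := by
    have h1 : Continuous fun z : EuclideanSpace ℝ (Fin n) => V z - m := (hd.continuous).sub continuous_const
    exact Real.continuous_sqrt.comp h1
  have hfnn : ∀ z, 0 ≤ f z := fun z => Real.sqrt_nonneg _
  set R : ℝ := f x / c + 1 with hR
  set h : EuclideanSpace ℝ (Fin n) → ℝ := fun z => f z + c * ‖z - x‖ with hh
  have hhc : Continuous h := hfc.add (continuous_const.mul ((continuous_id.sub continuous_const).norm))
  have hball : IsCompact (closedBall x R) := isCompact_closedBall x R
  have hxball : x ∈ closedBall x R := by
    simp [hR]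
    positivity
  obtain ⟨y, hyball, hymin⟩ := hball.exists_isMinOn ⟨x, hxball⟩ hhc.continuousOn
  have hhx : h x = f x := by simp [hh]
  have hhyx : h y ≤ f x := by
    have := hymin hxball
    simpa [hhx] using this
  have hyx : c * ‖y - x‖ ≤ f x := by
    have : f y + c * ‖y - x‖ ≤ f x := hhyx
    nlinarith [hfnn y]
  have hyxd : ‖y - x‖ ≤ f x / c := by
    rw [le_div_iff₀ hc]; linarith [hyx]
  -- y is a global minimizer of h
  have hglob : ∀ z, h y ≤ h z := by
    intro z
    by_cases hz : z ∈ closedBall x R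
    · exact hymin hz
    · have hzR : R < ‖z - x‖ := by
        simp only [mem_closedBall, dist_eq_norm] at hz
        linarith [not_le.mp hz]
      have : f x + c < c * ‖z - x‖ := by
        have h1 := (mul_lt_mul_iff_right₀ hc).mpr hzR
        have h2 : c * R = f x + c := by
          rw [hR, mul_add, mul_one, mul_div_cancel₀ _ (ne_of_gt hc)]
        linarith
      have : f x < h z := by
        have := hfnn z
        simp only [hh]; nlinarith
      linarith [hhyx]
  -- hence f z ≥ f y - c‖z - y‖ for all z
  have hkey : ∀ z : EuclideanSpace ℝ (Fin n), f y ≤ f z + c * ‖z - y‖ := by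
    intro z
    have h1 := hglob z
    have h2 : ‖z - x‖ ≤ ‖z - y‖ + ‖y - x‖ := by
      have := norm_add_le (z - y) (y - x)
      simpa [sub_add_sub_cancel] using this
    simp only [hh] at h1
    nlinarith
  -- Claim: V y = m
  have hVy : V y = m := by
    by_contra hne
    have hb : 0 < V y - m := by
      rcases lt_or_eq_of_le (hm y) with h1 | h1
      · linarith
      · exact absurd h1.symm hne
    have hfy : 0 < f y := Real.sqrt_pos.mpr hb
    -- f is differentiable at y
    set s : ℝ := 1 / (2 * Real.sqrt (V y - m)) with hs
    have hs0 : 0 < s := by positivity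
    have hsq : HasDerivAt Real.sqrt s (V y - m) := Real.hasDerivAt_sqrt (ne_of_gt hb)
    have hVd : HasFDerivAt (fun z => V z - m) (fderiv ℝ V y) y :=
      ((hd y).hasFDerivAt).sub_const m
    have hfd : HasFDerivAt f (s • fderiv ℝ V y) y := hsq.comp_hasFDerivAt y hVd
    set G : EuclideanSpace ℝ (Fin n) := (InnerProductSpace.toDual ℝ (EuclideanSpace ℝ (Fin n))).symm (s • fderiv ℝ V y) with hG
    have hGL : (InnerProductSpace.toDual ℝ (EuclideanSpace ℝ (Fin n))) G = s • fderiv ℝ V y :=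
      (InnerProductSpace.toDual ℝ (EuclideanSpace ℝ (Fin n))).apply_symm_apply _
    have hGnorm : ‖G‖ = s * ‖gradient V y‖ := by
      have h1 : ‖G‖ = ‖s • fderiv ℝ V y‖ := by
        rw [hG, (InnerProductSpace.toDual ℝ (EuclideanSpace ℝ (Fin n))).symm.norm_map]
      have h2 : ‖gradient V y‖ = ‖fderiv ℝ V y‖ := by
        rw [gradient, (InnerProductSpace.toDual ℝ (EuclideanSpace ℝ (Fin n))).symm.norm_map]
      rw [h1, h2, norm_smul, Real.norm_eq_abs, abs_of_pos hs0]
    -- PL inequality gives ‖G‖ large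
    have hPLy := hPL y
    have hgradpos : 0 < ‖gradient V y‖ ^ 2 := by
      by_contra hcon
      push_neg at hcon
      have : ‖gradient V y‖ ^ 2 = 0 := le_antisymm hcon (by positivity)
      rw [this] at hPLy; nlinarith
    have hsqVy : Real.sqrt (V y - m) ^ 2 = V y - m := Real.sq_sqrt (le_of_lt hb)
    have hGsq : 1 / (4 * CPL) ≤ ‖G‖ ^ 2 := by
      have hGn2 : ‖G‖ ^ 2 = ‖gradient V y‖ ^ 2 / (4 * (V y - m)) := by
        rw [hGnorm, mul_pow, hs, div_pow, mul_pow, one_pow, hsqVy]; ring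
      rw [hGn2, div_le_div_iff₀ (by positivity) (by linarith)]
      nlinarith
    have hGc : c < ‖G‖ := by
      have h1 : c ^ 2 < ‖G‖ ^ 2 := lt_of_lt_of_le hcc hGsq
      exact lt_of_pow_lt_pow_left₀ 2 (norm_nonneg G) h1
    -- directional derivative argument: ψ t = f (y + t • (-G))
    set w : EuclideanSpace ℝ (Fin n) := -G with hw
    set ψ : ℝ → ℝ := fun t => f (y + t • w) with hψ
    have hγ : HasDerivAt (fun t : ℝ => y + t • w) w 0 := by
      have := ((hasDerivAt_id (0 : ℝ)).smul_const w).const_add y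
      simpa using this
    have hψd : HasDerivAt ψ ((s • fderiv ℝ V y) w) 0 := by
      have hfd' : HasFDerivAt f (s • fderiv ℝ V y) ((fun t : ℝ => y + t • w) 0) := by
        simpa using hfd
      have := hfd'.comp_hasDerivAt 0 hγ
      simpa [Function.comp_def, hψ] using this
    have hLw : (s • fderiv ℝ V y) w = -‖G‖ ^ 2 := by
      have h1 : (s • fderiv ℝ V y) w = (InnerProductSpace.toDual ℝ (EuclideanSpace ℝ (Fin n))) G w := by rw [hGL]
      rw [h1, InnerProductSpace.toDual_apply_apply, hw, inner_neg_right, real_inner_self_eq_norm_sq]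
    -- slope bound for t > 0
    have hslope : ∀ t ∈ Ioi (0 : ℝ), -(c * ‖G‖) ≤ slope ψ 0 t := by
      intro t ht
      rw [mem_Ioi] at ht
      rw [slope_def_field]
      have h1 : f y ≤ f (y + t • w) + c * ‖(y + t • w) - y‖ := hkey _
      have h2 : ‖(y + t • w) - y‖ = t * ‖G‖ := by
        rw [add_sub_cancel_left, norm_smul, Real.norm_eq_abs, abs_of_pos ht, hw, norm_neg]
      rw [h2] at h1
      have hψ0 : ψ 0 = f y := by simp [hψ]
      have hψt : ψ t = f (y + t • w) := rfl
      rw [sub_zero, le_div_iff₀ ht, hψ0, hψt]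
      nlinarith
    have htend : Filter.Tendsto (slope ψ 0) (nhdsWithin 0 (Ioi 0)) (nhds (-‖G‖ ^ 2)) := by
      have := hasDerivAt_iff_tendsto_slope.mp hψd
      rw [hLw] at this
      exact this.mono_left (nhdsWithin_mono _ (fun t ht => ne_of_gt ht))
    have hlim : -(c * ‖G‖) ≤ -‖G‖ ^ 2 := by
      refine ge_of_tendsto htend ?_
      filter_upwards [self_mem_nhdsWithin] with t ht using hslope t ht
    have : ‖G‖ ≤ c := by nlinarith [norm_nonneg G]
    linarith
  exact ⟨y, hVy, by rw [dist_eq_norm]; rw [(neg_sub y x).symm, norm_neg]; exact hyxd⟩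

/-- quadratic growth consequence of the Polyak–Łojasiewicz inequality. -/
theorem stmt6 (n : ℕ) (V : EuclideanSpace ℝ (Fin n) → ℝ) (hd : Differentiable ℝ V)
    (m CPL : ℝ) (hCPL : 0 < CPL) (hm : ∀ x, m ≤ V x)
    (hne : {x | V x = m}.Nonempty)
    (hPL : ∀ x, V x - m ≤ CPL * ‖gradient V x‖ ^ 2) :
    ∀ x, (1 / (4 * CPL)) * (Metric.infDist x {y | V y = m}) ^ 2 ≤ V x - m := by
  intro x
  set S : Set (EuclideanSpace ℝ (Fin n)) := {y | V y = m}
  set d : ℝ := infDist x S with hd'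
  have hd0 : 0 ≤ d := infDist_nonneg
  have ha : 0 ≤ V x - m := by linarith [hm x]
  by_contra hcon
  push_neg at hcon
  have hdpos : 0 < d := by
    rcases lt_or_eq_of_le hd0 with h | h
    · exact h
    · exfalso; rw [← h] at hcon; simp at hcon; nlinarith
  set fx : ℝ := Real.sqrt (V x - m) with hfx
  have hfx0 : 0 ≤ fx := Real.sqrt_nonneg _
  have hfxsq : fx ^ 2 = V x - m := Real.sq_sqrt ha
  -- fx < d / (2 √CPL), so pick c in between
  have hcon' : 4 * CPL * (V x - m) < d ^ 2 := by
    have h4 : (0:ℝ) < 4 * CPL := by positivity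
    rw [one_div, inv_mul_eq_div, lt_div_iff₀ h4] at hcon
    linarith
  have hkey : fx / d < 1 / (2 * Real.sqrt CPL) := by
    rw [div_lt_div_iff₀ hdpos (by positivity)]
    -- fx * (2 √CPL) < d
    nlinarith [Real.sq_sqrt (le_of_lt hCPL), Real.sqrt_nonneg CPL, hfxsq, hfx0, hdpos,
      mul_nonneg hfx0 (Real.sqrt_nonneg CPL)]
  set c : ℝ := (fx / d + 1 / (2 * Real.sqrt CPL)) / 2 with hc'
  have hc : 0 < c := by
    have : 0 ≤ fx / d := by positivity
    have : 0 < 1 / (2 * Real.sqrt CPL) := by positivity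
    rw [hc']; linarith
  have hclt : c < 1 / (2 * Real.sqrt CPL) := by rw [hc']; linarith
  have hcgt : fx / d < c := by rw [hc']; linarith
  have hcc : c ^ 2 < 1 / (4 * CPL) := by
    have h1 : c ^ 2 < (1 / (2 * Real.sqrt CPL)) ^ 2 := by nlinarith
    have h2 : (1 / (2 * Real.sqrt CPL)) ^ 2 = 1 / (4 * CPL) := by
      rw [div_pow, mul_pow, one_pow, Real.sq_sqrt (le_of_lt hCPL)]; norm_num
    linarith [h2 ▸ h1]
  obtain ⟨y, hVy, hdist⟩ := ekeland_key n V hd m CPL hCPL hm hPL c hc hcc x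
  have h1 : d ≤ dist x y := infDist_le_dist_of_mem hVy
  have h2 : fx / c < d := by
    rw [div_lt_iff₀ hc]
    rw [div_lt_iff₀ hdpos] at hcgt
    linarith [hcgt]
  linarith [hdist]
end
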